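/- Abstract a posteriori (primal-dual gap) estimate: let u ∈ X minimize E over X with E(u) finite, let ρ_E : X × X → [0,∞) satisfy the coercivity inequality ρ_E(v,u) + E(u) ≤ E(v) for all v ∈ X, let X_h ⊆ X and Y_h ⊆ Y', and let u_h ∈ X_h minimize E over X_h. Then for every w_h ∈ X_h and every q_h ∈ Y_h one has ρ_E(u_h,u) ≤ E(w_h) - D(q_h). -/
import Mathlib


/-- Abstract a posteriori (primal-dual gap) estimate: if `u` minimizes
`E(v) = F(Bv) + G(v)` over `X` with `E(u)` finite, `ρ_E` satisfies the
coercivity inequality `ρ_E(v,u) + E(u) ≤ E(v)` for all `v ∈ X`, and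
`u_h ∈ X_h ⊆ X` minimizes `E` over `X_h`, then for every `w_h ∈ X_h` and
every `q_h ∈ Y_h ⊆ Y'` one has `ρ_E(u_h,u) ≤ E(w_h) - D(q_h)`, where
`D(q) = -F*(q) - G*(-B'q)`. -/
theorem abstract_a_posteriori_primal_dual_gap
    {X Y : Type*} [NormedAddCommGroup X] [NormedSpace ℝ X]
    [NormedAddCommGroup Y] [NormedSpace ℝ Y]
    (B : X →L[ℝ] Y) (F : Y → EReal) (G : X → EReal)
    (hF_bot : ∀ p, F p ≠ ⊥) (hF_proper : ∃ p, F p ≠ ⊤)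
    (hG_bot : ∀ w, G w ≠ ⊥) (hG_proper : ∃ w, G w ≠ ⊤)
    (Fstar : (Y →L[ℝ] ℝ) → EReal)
    (hFstar : ∀ q : Y →L[ℝ] ℝ, Fstar q = ⨆ p : Y, ((q p : EReal) - F p))
    (Gstar : (X →L[ℝ] ℝ) → EReal)
    (hGstar : ∀ w : X →L[ℝ] ℝ, Gstar w = ⨆ v : X, ((w v : EReal) - G v))
    (E : X → EReal) (hE : ∀ v, E v = F (B v) + G v)
    (D : (Y →L[ℝ] ℝ) → EReal)
    (hD : ∀ q : Y →L[ℝ] ℝ, D q = -Fstar q - Gstar (-(q.comp B)))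
    (ρ : X → X → ℝ) (hρ : ∀ v w, 0 ≤ ρ v w)
    (u : X) (hu_min : ∀ v : X, E u ≤ E v)
    (hu_top : E u ≠ ⊤) (hu_bot : E u ≠ ⊥)
    (hcoercive : ∀ v : X, (ρ v u : EReal) + E u ≤ E v)
    (Xh : Set X) (Yh : Set (Y →L[ℝ] ℝ))
    (uh : X) (huh_mem : uh ∈ Xh) (huh_min : ∀ vh ∈ Xh, E uh ≤ E vh)
    (wh : X) (hwh : wh ∈ Xh) (qh : Y →L[ℝ] ℝ) (hqh : qh ∈ Yh) :
    (ρ uh u : EReal) ≤ E wh - D qh := by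
  lift E u to ℝ using ⟨hu_top, hu_bot⟩ with c hc
  have hEu : F (B u) + G u = (c : EReal) := (hE u).symm.trans hc.symm
  have hFu_top : F (B u) ≠ ⊤ := fun h => by
    rw [h, EReal.top_add_of_ne_bot (hG_bot u)] at hEu
    exact (EReal.coe_ne_top c) hEu.symm
  have hGu_top : G u ≠ ⊤ := fun h => by
    rw [h, EReal.add_top_of_ne_bot (hF_bot (B u))] at hEu
    exact (EReal.coe_ne_top c) hEu.symm
  lift F (B u) to ℝ using ⟨hFu_top, hF_bot (B u)⟩ with a ha
  lift G u to ℝ using ⟨hGu_top, hG_bot u⟩ with g hg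
  have hag : a + g = c := by exact_mod_cast hEu
  set t : ℝ := qh (B u) with ht
  -- weak duality: D qh ≤ c
  have hF1 : ((t : ℝ) : EReal) - (a : EReal) ≤ Fstar qh := by
    have h := le_iSup (fun p : Y => ((qh p : EReal) - F p)) (B u)
    rw [← hFstar, ← ha] at h
    exact h
  have hG1 : (((-t : ℝ)) : EReal) - (g : EReal) ≤ Gstar (-(qh.comp B)) := by
    have h := le_iSup (fun v : X => (((-(qh.comp B)) v : ℝ) : EReal) - G v) u
    rw [← hGstar, ← hg] at h
    have he : ((-(qh.comp B)) u : ℝ) = -t := by simp [ht]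
    rwa [he] at h
  have hdual : D qh ≤ (c : EReal) := by
    rw [hD]
    calc -Fstar qh - Gstar (-(qh.comp B))
        ≤ -(((t : ℝ) : EReal) - (a : EReal)) - ((((-t : ℝ)) : EReal) - (g : EReal)) :=
          EReal.sub_le_sub (EReal.neg_le_neg_iff.mpr hF1) hG1
      _ = ((c : ℝ) : EReal) := by
          rw [← hag]; norm_cast; ring
  -- primal step
  have hprimal : (ρ uh u : EReal) ≤ E wh - (c : EReal) := by
    refine (EReal.le_sub_iff_add_le (Or.inl (EReal.coe_ne_bot c)) (Or.inl (EReal.coe_ne_top c))).mpr ?_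
    exact le_trans (hcoercive uh) (huh_min wh hwh)
  calc (ρ uh u : EReal) ≤ E wh - (c : EReal) := hprimal
    _ ≤ E wh - D qh := EReal.sub_le_sub le_rfl hdual
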